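/- Let p be a prime, G a finite group, S a normal subgroup of G of order coprime to p, and P a p-subgroup of G such that G = S·C_G(P). Then C_G(P) controls the p-fusion in G in the following sense: for every p-subgroup Q of G with Q ≤ C_G(P), one has N_G(Q) ⊆ C_G(Q) · C_G(P). -/

import Mathlib

open Pointwise

/-- With `S ⊴ G` of order coprime to `p` and `P` a `p`-subgroup with
`G = S·C_G(P)`, the centraliser `C_G(P)` controls `p`-fusion: for every `p`-subgroup
`Q ≤ C_G(P)` one has `N_G(Q) ⊆ C_G(Q)·C_G(P)`. -/
theorem stmt_6 (p : ℕ) (hp : p.Prime) (G : Type*) [Group G] [Finite G]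
    (S : Subgroup G) (hS : S.Normal) (hScop : Nat.Coprime (Nat.card S) p)
    (P : Subgroup G) (hP : IsPGroup p P)
    (hfact : ∀ g : G, ∃ s ∈ S, ∃ c ∈ Subgroup.centralizer (P : Set G), g = s * c) :
    ∀ Q : Subgroup G, IsPGroup p Q → Q ≤ Subgroup.centralizer (P : Set G) →
      ∀ g ∈ Subgroup.normalizer (Q : Set G),
        ∃ a ∈ Subgroup.centralizer (Q : Set G),
          ∃ c ∈ Subgroup.centralizer (P : Set G), g = a * c := by
  classical
  haveI : Fact p.Prime := ⟨hp⟩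
  intro Q hQ hQC g hg
  set C := Subgroup.centralizer (P : Set G) with hCdef
  obtain ⟨s, hsS, c, hcC, hgsc⟩ := hfact g
  -- S meets any p-subgroup trivially
  have hbot : ∀ T : Subgroup G, IsPGroup p T → S ⊓ T = ⊥ := by
    intro T hT
    obtain ⟨n, hn⟩ := hT.exists_card_eq
    exact Subgroup.inf_eq_bot_of_coprime (by rw [hn]; exact hScop.pow_right n)
  -- key: a p-subgroup T with W ≤ T ≤ S ⊔ W equals W
  have key : ∀ (W T : Subgroup G), IsPGroup p T → W ≤ T → T ≤ S ⊔ W → T = W := by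
    intro W T hT hWT hTle
    refine le_antisymm ?_ hWT
    intro x hx
    have hx' : x ∈ (S : Set G) * (W : Set G) := by
      rw [← Subgroup.normal_mul]; exact hTle hx
    obtain ⟨a, ha, w, hw, rfl⟩ := hx'
    have haT : a ∈ T := by
      have := mul_mem hx (inv_mem (hWT hw)); simpa using this
    have hmem : a ∈ S ⊓ T := ⟨ha, haT⟩
    rw [hbot T hT] at hmem
    simp only [Subgroup.mem_bot] at hmem
    subst hmem; simpa using hw
  -- Q' = c Q c⁻¹
  set Q' : Subgroup G := Subgroup.map (MulAut.conj c).toMonoidHom Q with hQ'def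
  have hmemQ' : ∀ x : G, x ∈ Q' ↔ ∃ y ∈ Q, c * y * c⁻¹ = x := by
    intro x
    simp [hQ'def, Subgroup.mem_map, MulAut.conj_apply]
  have hQ'p : IsPGroup p Q' := hQ.map _
  have hc_eq : c = s⁻¹ * g := by rw [hgsc]; group
  -- conjugation by c is the same as conjugation by s⁻¹
  have hconj : ∀ x : G, x ∈ Q' ↔ s * x * s⁻¹ ∈ Q := by
    intro x
    rw [hmemQ']
    constructor
    · rintro ⟨y, hy, rfl⟩
      have heq : s * (c * y * c⁻¹) * s⁻¹ = g * y * g⁻¹ := by rw [hc_eq]; group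
      rw [heq]
      exact (Subgroup.mem_normalizer_iff.mp hg y).mp hy
    · intro hx
      refine ⟨g⁻¹ * (s * x * s⁻¹) * g, ?_, ?_⟩
      · have := (Subgroup.mem_normalizer_iff''.mp hg (s * x * s⁻¹)).mp hx
        simpa [mul_assoc] using this
      · rw [hc_eq]; group
  have hQ'C : Q' ≤ C := by
    intro x hx
    obtain ⟨y, hy, rfl⟩ := (hmemQ' x).mp hx
    exact mul_mem (mul_mem hcC (hQC hy)) (inv_mem hcC)
  -- S ⊔ Q' = S ⊔ Q
  have hsup : S ⊔ Q' = S ⊔ Q := by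
    apply le_antisymm
    · refine sup_le le_sup_left ?_
      intro x hx
      have hq : s * x * s⁻¹ ∈ Q := (hconj x).mp hx
      have hxeq : x = (s⁻¹ * ((s * x * s⁻¹) * s * (s * x * s⁻¹)⁻¹)) * (s * x * s⁻¹) := by
        group
      rw [hxeq]
      exact mul_mem
        (Subgroup.mem_sup_left (mul_mem (inv_mem hsS) (hS.conj_mem s hsS _)))
        (Subgroup.mem_sup_right hq)
    · refine sup_le le_sup_left ?_
      intro q hq
      have hx : s⁻¹ * q * s ∈ Q' := by
        rw [hconj]
        have heq : s * (s⁻¹ * q * s) * s⁻¹ = q := by group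
        rwa [heq]
      have hqeq : q = (s * (s⁻¹ * q * s) * s⁻¹ * (s⁻¹ * q * s)⁻¹) * (s⁻¹ * q * s) := by
        group
      rw [hqeq]
      refine mul_mem (Subgroup.mem_sup_left ?_) (Subgroup.mem_sup_right hx)
      have h2 : s * (s⁻¹ * q * s) * s⁻¹ * (s⁻¹ * q * s)⁻¹
          = s * ((s⁻¹ * q * s) * s⁻¹ * (s⁻¹ * q * s)⁻¹) := by group
      rw [h2]
      exact mul_mem hsS (hS.conj_mem s⁻¹ (inv_mem hsS) _)
  -- the ambient group H = (S ⊔ Q) ⊓ C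
  set H : Subgroup G := (S ⊔ Q) ⊓ C with hHdef
  have hQH : Q ≤ H := le_inf le_sup_right hQC
  have hQ'H : Q' ≤ H := le_inf (hsup ▸ (le_sup_right : Q' ≤ S ⊔ Q')) hQ'C
  -- the two Sylow subgroups of H
  have hQ1p : IsPGroup p (Q.subgroupOf H) :=
    hQ.of_equiv (Subgroup.subgroupOfEquivOfLe hQH).symm
  have hQ2p : IsPGroup p (Q'.subgroupOf H) :=
    hQ'p.of_equiv (Subgroup.subgroupOfEquivOfLe hQ'H).symm
  obtain ⟨R, hR⟩ := hQ1p.exists_le_sylow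
  obtain ⟨R₂, hR₂⟩ := hQ2p.exists_le_sylow
  have hsubOfmap : ∀ (W : Subgroup G), W ≤ H → (W.subgroupOf H).map H.subtype = W := by
    intro W hW
    rw [Subgroup.subgroupOf_map_subtype, inf_eq_left.mpr hW]
  -- R = Q.subgroupOf H
  have hReq : (R : Subgroup ↥H) = Q.subgroupOf H := by
    have h1 : ((R : Subgroup ↥H).map H.subtype) = Q := by
      apply key Q _ (R.2.map _)
      · rw [← hsubOfmap Q hQH]; exact Subgroup.map_mono hR
      · exact le_trans (Subgroup.map_subtype_le _) inf_le_left
    exact Subgroup.map_injective (H.subtype_injective)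
      (h1.trans (hsubOfmap Q hQH).symm)
  have hR₂eq : (R₂ : Subgroup ↥H) = Q'.subgroupOf H := by
    have h1 : ((R₂ : Subgroup ↥H).map H.subtype) = Q' := by
      apply key Q' _ (R₂.2.map _)
      · rw [← hsubOfmap Q' hQ'H]; exact Subgroup.map_mono hR₂
      · rw [hsup]; exact le_trans (Subgroup.map_subtype_le _) inf_le_left
    exact Subgroup.map_injective (H.subtype_injective)
      (h1.trans (hsubOfmap Q' hQ'H).symm)
  -- Sylow conjugacy in H
  obtain ⟨h, hh⟩ := MulAction.exists_smul_eq (↥H) R₂ R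
  have hsub : MulAut.conj h • (Q'.subgroupOf H) = Q.subgroupOf H := by
    have h1 : ((h • R₂ : Sylow p ↥H) : Subgroup ↥H) = (R : Subgroup ↥H) := by rw [hh]
    rwa [Sylow.coe_subgroup_smul, hReq, hR₂eq] at h1
  -- membership translation: for z in H, z ∈ Q ↔ h⁻¹ z h ∈ Q'
  have hconjH : ∀ z : ↥H, ((z : G) ∈ Q ↔ (h : G)⁻¹ * z * (h : G) ∈ Q') := by
    intro z
    constructor
    · intro hz
      have hz1 : z ∈ Q.subgroupOf H := by
        simpa [Subgroup.mem_subgroupOf] using hz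
      rw [← hsub, Subgroup.mem_pointwise_smul_iff_inv_smul_mem] at hz1
      have h2 : ((h⁻¹ * z * h : ↥H) : G) ∈ Q' := by
        simpa [Subgroup.mem_subgroupOf, MulAut.smul_def, MulAut.conj_apply,
          mul_assoc] using hz1
      simpa [mul_assoc] using h2
    · intro hz
      have hz1 : (h⁻¹ * z * h : ↥H) ∈ Q'.subgroupOf H := by
        simpa [Subgroup.mem_subgroupOf, mul_assoc] using hz
      have h2 : z ∈ Q.subgroupOf H := by
        rw [← hsub, Subgroup.mem_pointwise_smul_iff_inv_smul_mem]
        simpa [MulAut.smul_def, MulAut.conj_apply, mul_assoc] using hz1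
      simpa [Subgroup.mem_subgroupOf] using h2
  have hhC : (h : G) ∈ C := h.2.2
  have hhSQ : (h : G) ∈ S ⊔ Q := h.2.1
  -- n = h * c normalizes Q
  set n : G := (h : G) * c with hndef
  have hnC : n ∈ C := mul_mem hhC hcC
  have hnN : n ∈ Subgroup.normalizer (Q : Set G) := by
    rw [Subgroup.mem_normalizer_iff]
    intro x
    constructor
    · intro hx
      have hw : c * x * c⁻¹ ∈ Q' := (hmemQ' _).mpr ⟨x, hx, rfl⟩
      have hwH : c * x * c⁻¹ ∈ H := hQ'H hw
      have hzH : ((h : G) * (c * x * c⁻¹) * (h : G)⁻¹) ∈ H :=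
        H.mul_mem (H.mul_mem h.2 hwH) (H.inv_mem h.2)
      have h3 : (h : G) * (c * x * c⁻¹) * (h : G)⁻¹ ∈ Q :=
        (hconjH ⟨(h : G) * (c * x * c⁻¹) * (h : G)⁻¹, hzH⟩).mpr (by
          simpa [mul_assoc] using hw)
      have h4 : (h : G) * (c * x * c⁻¹) * (h : G)⁻¹ = n * x * n⁻¹ := by
        rw [hndef]; group
      rwa [h4] at h3
    · intro hx
      have hzH : n * x * n⁻¹ ∈ H := hQH hx
      have h3 : (h : G)⁻¹ * (n * x * n⁻¹) * (h : G) ∈ Q' :=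
        (hconjH ⟨n * x * n⁻¹, hzH⟩).mp hx
      have h2 : (h : G)⁻¹ * (n * x * n⁻¹) * (h : G) = c * x * c⁻¹ := by
        rw [hndef]; group
      rw [h2] at h3
      obtain ⟨y, hy, hyx⟩ := (hmemQ' _).mp h3
      have hxy : y = x := mul_left_cancel (mul_right_cancel hyx)
      rwa [← hxy]
  -- a = g * n⁻¹ ∈ N_G(Q) ∩ (S ⊔ Q)
  have haN : g * n⁻¹ ∈ Subgroup.normalizer (Q : Set G) := mul_mem hg (inv_mem hnN)
  have haSQ : g * n⁻¹ ∈ S ⊔ Q := by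
    have heq : g * n⁻¹ = s * (h : G)⁻¹ := by rw [hgsc, hndef]; group
    rw [heq]
    exact mul_mem (Subgroup.mem_sup_left hsS) (inv_mem hhSQ)
  -- decompose a = s₁ * q
  have hmul : (g * n⁻¹) ∈ (S : Set G) * (Q : Set G) := by
    rw [← Subgroup.normal_mul]; exact haSQ
  obtain ⟨s₁, hs₁S, q, hqQ, hseq⟩ := hmul
  have hs₁N : s₁ ∈ Subgroup.normalizer (Q : Set G) := by
    have heq : s₁ = (g * n⁻¹) * q⁻¹ := by rw [← hseq]; group
    rw [heq]
    exact mul_mem haN (inv_mem (Subgroup.le_normalizer hqQ))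
  -- s₁ centralizes Q
  have hs₁C : s₁ ∈ Subgroup.centralizer (Q : Set G) := by
    rw [Subgroup.mem_centralizer_iff]
    intro x hx
    have hxQ : s₁ * x * s₁⁻¹ ∈ Q := (Subgroup.mem_normalizer_iff.mp hs₁N x).mp hx
    have htQ : s₁ * x * s₁⁻¹ * x⁻¹ ∈ Q := mul_mem hxQ (inv_mem hx)
    have htS : s₁ * x * s₁⁻¹ * x⁻¹ ∈ S := by
      have heq : s₁ * x * s₁⁻¹ * x⁻¹ = s₁ * (x * s₁⁻¹ * x⁻¹) := by group
      rw [heq]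
      exact mul_mem hs₁S (hS.conj_mem s₁⁻¹ (inv_mem hs₁S) x)
    have hmem : s₁ * x * s₁⁻¹ * x⁻¹ ∈ S ⊓ Q := ⟨htS, htQ⟩
    rw [hbot Q hQ] at hmem
    simp only [Subgroup.mem_bot] at hmem
    calc x * s₁ = (s₁ * x * s₁⁻¹ * x⁻¹) * (x * s₁) := by rw [hmem]; group
      _ = s₁ * x := by group
  -- conclude
  refine ⟨s₁, hs₁C, q * (h : G) * c, ?_, ?_⟩
  · exact mul_mem (mul_mem (hQC hqQ) hhC) hcC
  · have heq : g = (g * n⁻¹) * n := by group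
    rw [heq, ← hseq, hndef]
    group
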